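/- arXiv:1306.1974 — 5 statements merged into one kernel-verified Lean document; each statement's English description precedes it below -/
import Mathlib

section
/- Let S be a semigroup of complex n×n matrices, each of which is a partial isometry in the block form guaranteed by the structure theorem: each T ∈ S is an m×m block matrix with k×k blocks, each nonzero block a unitary matrix, and at most one nonzero block in each block row and each block column. Then every idempotent in S is a block-diagonal matrix whose diagonal blocks are either 0 or the k×k identity, and consequently any two idempotents in S commute. -/
open Matrix

/-- The `(i, j)` block (a `k × k` matrix) of an `m × m` block matrix with
`k × k` blocks. -/
def blk {m k : ℕ} (T : Matrix (Fin m × Fin k) (Fin m × Fin k) ℂ) (i j : Fin m) :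
    Matrix (Fin k) (Fin k) ℂ :=
  Matrix.of fun a b => T (i, a) (j, b)

/-- `T` is an `m × m` block matrix with `k × k` blocks in which every nonzero block
is unitary and every block row and every block column contains at most one
nonzero block. -/
def GoodBlockForm {m k : ℕ} (T : Matrix (Fin m × Fin k) (Fin m × Fin k) ℂ) : Prop :=
  (∀ i j, blk T i j = 0 ∨ ((blk T i j)ᴴ * blk T i j = 1 ∧ blk T i j * (blk T i j)ᴴ = 1)) ∧
  (∀ i j j', blk T i j ≠ 0 → blk T i j' ≠ 0 → j = j') ∧
  (∀ i i' j, blk T i j ≠ 0 → blk T i' j ≠ 0 → i = i')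

lemma blk_mul {m k : ℕ} (A B : Matrix (Fin m × Fin k) (Fin m × Fin k) ℂ) (i j : Fin m) :
    blk (A * B) i j = ∑ l, blk A i l * blk B l j := by
  ext a b
  simp [blk, Matrix.mul_apply, Matrix.sum_apply, Fintype.sum_prod_type]

lemma idem_struct {m k : ℕ} (P : Matrix (Fin m × Fin k) (Fin m × Fin k) ℂ)
    (hg : GoodBlockForm P) (hP : P * P = P) :
    (∀ i j : Fin m, i ≠ j → blk P i j = 0) ∧
    (∀ i : Fin m, blk P i i = 0 ∨ blk P i i = 1) := by
  obtain ⟨h1, h2, h3⟩ := hg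
  have key : ∀ i j, blk P i j = ∑ l, blk P i l * blk P l j := by
    intro i j; rw [← blk_mul, hP]
  have offdiag : ∀ i j : Fin m, i ≠ j → blk P i j = 0 := by
    intro i j hij
    by_contra hne
    have hsum : blk P i j = blk P i j * blk P j j := by
      conv_lhs => rw [key i j]
      refine Fintype.sum_eq_single j ?_
      intro l hl
      have : blk P i l = 0 := by
        by_contra h
        exact hl (h2 i l j h hne)
      rw [this, zero_mul]
    have hjj : blk P j j ≠ 0 := by
      intro h0
      rw [h0, mul_zero] at hsum
      exact hne hsum
    exact hij (h3 i j j hne hjj)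
  constructor
  · exact offdiag
  · intro i
    by_cases hne : blk P i i = 0
    · exact Or.inl hne
    right
    obtain ⟨hu, _⟩ := (h1 i i).resolve_left hne
    have hsq : blk P i i = blk P i i * blk P i i := by
      conv_lhs => rw [key i i]
      refine Fintype.sum_eq_single i ?_
      intro l hl
      rw [offdiag i l (Ne.symm hl), zero_mul]
    calc blk P i i = ((blk P i i)ᴴ * blk P i i) * blk P i i := by rw [hu, one_mul]
      _ = (blk P i i)ᴴ * (blk P i i * blk P i i) := by rw [mul_assoc]
      _ = (blk P i i)ᴴ * blk P i i := by rw [← hsq]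
      _ = 1 := hu

lemma idem_diag {m k : ℕ} (P : Matrix (Fin m × Fin k) (Fin m × Fin k) ℂ)
    (hg : GoodBlockForm P) (hP : P * P = P) :
    P = Matrix.diagonal (fun p => P p p) := by
  obtain ⟨hoff, hdiag⟩ := idem_struct P hg hP
  ext ⟨i, a⟩ ⟨j, b⟩
  rw [Matrix.diagonal_apply]
  by_cases hij : i = j
  · subst hij
    by_cases hab : a = b
    · subst hab; simp
    · have : ((i, a) : Fin m × Fin k) ≠ (i, b) := by simp [hab]
      rw [if_neg this]
      rcases hdiag i with h | h
      · have := congrFun (congrFun h a) b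
        simpa [blk] using this
      · have := congrFun (congrFun h a) b
        simpa [blk, Matrix.one_apply, hab] using this
  · have : ((i, a) : Fin m × Fin k) ≠ (j, b) := by simp [hij]
    rw [if_neg this]
    have := congrFun (congrFun (hoff i j hij) a) b
    simpa [blk] using this

/-- In a semigroup of block partial isometries of the above form, every idempotent
is block diagonal with diagonal blocks `0` or `I_k`, and hence any two idempotents
commute. -/
theorem stmt4 {m k : ℕ} (S : Set (Matrix (Fin m × Fin k) (Fin m × Fin k) ℂ))
    (hmul : ∀ A ∈ S, ∀ B ∈ S, A * B ∈ S)
    (hform : ∀ T ∈ S, GoodBlockForm T) :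
    (∀ P ∈ S, P * P = P →
      (∀ i j : Fin m, i ≠ j → blk P i j = 0) ∧
      (∀ i : Fin m, blk P i i = 0 ∨ blk P i i = 1)) ∧
    (∀ P ∈ S, ∀ Q ∈ S, P * P = P → Q * Q = Q → P * Q = Q * P) := by
  constructor
  · intro P hPS hP
    exact idem_struct P (hform P hPS) hP
  · intro P hPS Q hQS hP hQ
    rw [idem_diag P (hform P hPS) hP, idem_diag Q (hform Q hQS) hQ,
      Matrix.diagonal_mul_diagonal, Matrix.diagonal_mul_diagonal]
    exact congrArg Matrix.diagonal (funext fun p => mul_comm _ _)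
end

section
/- Let S be an irreducible semigroup of complex n×n matrices bounded above in norm by C ≥ 1, and suppose every non-nilpotent element of S has spectral radius 1. Then every nonzero element T of S satisfies ‖T‖ ≥ 1/C². (In particular the nonzero elements of S are uniformly bounded below in norm.) -/
open Matrix

/-- The operator norm of a complex matrix acting on `ℂ^n` with the standard
inner product. -/
noncomputable def opNorm {n : ℕ} (T : Matrix (Fin n) (Fin n) ℂ) : ℝ :=
  ‖Matrix.toEuclideanCLM (𝕜 := ℂ) T‖

lemma opNorm_mul_le {n : ℕ} (A B : Matrix (Fin n) (Fin n) ℂ) :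
    opNorm (A * B) ≤ opNorm A * opNorm B := by
  unfold opNorm
  rw [_root_.map_mul]
  exact norm_mul_le _ _

lemma opNorm_nonneg {n : ℕ} (A : Matrix (Fin n) (Fin n) ℂ) : 0 ≤ opNorm A :=
  norm_nonneg _

lemma mulVecLin_eq_zero_iff {n : ℕ} {A : Matrix (Fin n) (Fin n) ℂ} :
    A.mulVecLin = 0 ↔ A = 0 := by
  rw [← Matrix.toLin'_apply']
  exact LinearEquiv.map_eq_zero_iff _

/-- If `S` is an irreducible semigroup bounded above in norm by `C ≥ 1` in which
every non-nilpotent element has spectral radius `1`, then every nonzero element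
has norm at least `1 / C²`. -/
theorem stmt7 {n : ℕ} (S : Set (Matrix (Fin n) (Fin n) ℂ))
    (hmul : ∀ A ∈ S, ∀ B ∈ S, A * B ∈ S)
    (hirr : ∀ V : Submodule ℂ (Fin n → ℂ),
      (∀ T ∈ S, ∀ x ∈ V, T.mulVec x ∈ V) → V = ⊥ ∨ V = ⊤)
    (C : ℝ) (hC : 1 ≤ C) (habove : ∀ T ∈ S, opNorm T ≤ C)
    (hsr : ∀ T ∈ S, ¬ IsNilpotent T → spectralRadius ℂ T = 1) :
    ∀ T ∈ S, T ≠ 0 → 1 / C ^ 2 ≤ opNorm T := by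
  classical
  intro T hT hT0
  by_contra hcon
  push_neg at hcon
  -- dispose of the trivial case n = 0
  rcases Nat.eq_zero_or_pos n with hn | hn
  · subst hn
    exact hT0 (Subsingleton.elim T 0)
  haveI : Nonempty (Fin n) := ⟨⟨0, hn⟩⟩
  haveI : Nontrivial (EuclideanSpace ℂ (Fin n)) := by
    refine ⟨0, EuclideanSpace.single ⟨0, hn⟩ 1, ?_⟩
    intro h
    have := congrFun (congrArg (fun (v : EuclideanSpace ℂ (Fin n)) i => v i) h.symm) ⟨0, hn⟩
    simp [EuclideanSpace.single] at this
  have hC0 : (0 : ℝ) < C := lt_of_lt_of_le one_pos hC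
  -- the semigroup with identity adjoined
  set S₁ : Set (Matrix (Fin n) (Fin n) ℂ) := insert 1 S with hS₁def
  have h1S₁ : (1 : Matrix (Fin n) (Fin n) ℂ) ∈ S₁ := Set.mem_insert _ _
  have hSS₁ : S ⊆ S₁ := Set.subset_insert _ _
  have hleft : ∀ A ∈ S₁, ∀ X ∈ S, A * X ∈ S := by
    rintro A (rfl | hA) X hX
    · simpa using hX
    · exact hmul A hA X hX
  have hright : ∀ X ∈ S, ∀ B ∈ S₁, X * B ∈ S := by
    rintro X hX B (rfl | hB)
    · simpa using hX
    · exact hmul X hX B hB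
  have hS₁mul : ∀ A ∈ S₁, ∀ B ∈ S₁, A * B ∈ S₁ := by
    rintro A (rfl | hA) B hB
    · simpa using hB
    · rcases hB with rfl | hB
      · simpa using hSS₁ hA
      · exact hSS₁ (hmul A hA B hB)
  have hnormS₁ : ∀ A ∈ S₁, opNorm A ≤ C := by
    rintro A (rfl | hA)
    · calc opNorm (1 : Matrix (Fin n) (Fin n) ℂ) = ‖(1 : EuclideanSpace ℂ (Fin n) →L[ℂ] EuclideanSpace ℂ (Fin n))‖ := by
            unfold opNorm; rw [_root_.map_one]
      _ = 1 := norm_one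
      _ ≤ C := hC
    · exact habove A hA
  -- the ideal J generated by T
  set J : Set (Matrix (Fin n) (Fin n) ℂ) :=
    {X | ∃ A ∈ S₁, ∃ B ∈ S₁, X = A * T * B} with hJdef
  have hTJ : T ∈ J := ⟨1, h1S₁, 1, h1S₁, by simp⟩
  have hJS : J ⊆ S := by
    rintro X ⟨A, hA, B, hB, rfl⟩
    exact hright _ (hleft A hA T hT) B hB
  have hJmulS₁ : ∀ X ∈ J, ∀ Y ∈ S₁, X * Y ∈ J := by
    rintro X ⟨A, hA, B, hB, rfl⟩ Y hY
    exact ⟨A, hA, B * Y, hS₁mul B hB Y hY, by rw [mul_assoc]⟩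
  -- every element of J has norm < 1
  have hJnorm : ∀ X ∈ J, opNorm X < 1 := by
    rintro X ⟨A, hA, B, hB, rfl⟩
    have h1 : opNorm (A * T * B) ≤ opNorm A * opNorm T * opNorm B :=
      le_trans (opNorm_mul_le _ _)
        (mul_le_mul_of_nonneg_right (opNorm_mul_le _ _) (opNorm_nonneg _))
    have hA' := hnormS₁ A hA
    have hB' := hnormS₁ B hB
    have hTn := opNorm_nonneg T
    have hAn := opNorm_nonneg A
    have hBn := opNorm_nonneg B
    have hT1 : opNorm T < 1 / C ^ 2 := hcon
    have hCC : C * (1 / C ^ 2) * C = 1 := by field_simp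
    have s1 : opNorm A * opNorm T * opNorm B ≤ C * opNorm T * C := by
      have h2 : opNorm A * opNorm T ≤ C * opNorm T := mul_le_mul_of_nonneg_right hA' hTn
      exact mul_le_mul h2 hB' hBn (by positivity)
    have s2 : C * opNorm T * C < C * (1 / C ^ 2) * C := by
      exact mul_lt_mul_of_pos_right (mul_lt_mul_of_pos_left hT1 hC0) hC0
    linarith
  -- every element of J is nilpotent
  have hJnil : ∀ X ∈ J, IsNilpotent X := by
    intro X hX
    by_contra hnil
    have hsr1 := hsr X (hJS hX) hnil
    have hrad : (1 : ENNReal) ≤ ‖Matrix.toEuclideanCLM (𝕜 := ℂ) X‖₊ := by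
      calc (1 : ENNReal) = spectralRadius ℂ X := hsr1.symm
        _ = spectralRadius ℂ (Matrix.toEuclideanCLM (𝕜 := ℂ) X) := by
            unfold spectralRadius
            rw [AlgEquiv.spectrum_eq (Matrix.toEuclideanCLM (𝕜 := ℂ)) X]
        _ ≤ ‖Matrix.toEuclideanCLM (𝕜 := ℂ) X‖₊ := spectrum.spectralRadius_le_nnnorm _
    have h1' : (1 : ℝ) ≤ opNorm X := by
      have := ENNReal.one_le_coe_iff.mp hrad
      unfold opNorm; exact_mod_cast this
    have := hJnorm X hX
    linarith
  -- choose a nonzero element of J of minimal rank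
  have hex : ∃ k : ℕ, ∃ X, X ∈ J ∧ X ≠ 0 ∧ X.rank = k := ⟨T.rank, T, hTJ, hT0, rfl⟩
  obtain ⟨X, hXJ, hX0, hXr⟩ := Nat.find_spec hex
  have hmin : ∀ Y ∈ J, Y ≠ 0 → X.rank ≤ Y.rank := by
    intro Y hY hY0
    rw [hXr]
    exact Nat.find_min' hex ⟨Y, hY, hY0, rfl⟩
  -- the key claim : X * Y * X = 0 for all Y ∈ S₁
  have hkey : ∀ Y ∈ S₁, X * Y * X = 0 := by
    intro Y hY
    by_contra hne
    have hXS₁ : X ∈ S₁ := hSS₁ (hJS hXJ)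
    have hZJ : X * Y ∈ J := hJmulS₁ X hXJ Y hY
    have hXYX : X * Y * X ∈ J := hJmulS₁ _ hZJ X hXS₁
    -- range comparison
    have hle : LinearMap.range (X * Y * X).mulVecLin ≤ LinearMap.range X.mulVecLin := by
      rw [show X * Y * X = X * (Y * X) by rw [mul_assoc], Matrix.mulVecLin_mul]
      exact LinearMap.range_comp_le_range _ _
    have heq : LinearMap.range (X * Y * X).mulVecLin = LinearMap.range X.mulVecLin := by
      refine Submodule.eq_of_le_of_finrank_le hle ?_
      exact hmin _ hXYX hne
    -- iterate
    have hmap1 : Submodule.map (X * Y).mulVecLin (LinearMap.range X.mulVecLin)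
        = LinearMap.range X.mulVecLin := by
      rw [← LinearMap.range_comp, ← Matrix.mulVecLin_mul]
      exact heq
    have hmapk : ∀ k : ℕ, Submodule.map ((X * Y) ^ k).mulVecLin (LinearMap.range X.mulVecLin)
        = LinearMap.range X.mulVecLin := by
      intro k
      induction k with
      | zero => simp [Matrix.mulVecLin_one, Submodule.map_id]
      | succ k ih =>
        rw [pow_succ, Matrix.mulVecLin_mul, Submodule.map_comp, hmap1, ih]
    obtain ⟨m, hm⟩ := hJnil _ hZJ
    have := hmapk m
    rw [hm, Matrix.mulVecLin_zero, Submodule.map_zero] at this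
    have hX0' : X.mulVecLin = 0 := LinearMap.range_eq_bot.mp this.symm
    exact hX0 (mulVecLin_eq_zero_iff.mp hX0')
  -- the invariant subspace
  set G : Set (Fin n → ℂ) := {v | ∃ A ∈ S₁, ∃ w, v = (A * X).mulVec w} with hGdef
  set U : Submodule ℂ (Fin n → ℂ) := Submodule.span ℂ G with hUdef
  have hUinv : ∀ T' ∈ S, ∀ x ∈ U, T'.mulVec x ∈ U := by
    intro T' hT' x hx
    induction hx using Submodule.span_induction with
    | mem v hv =>
      obtain ⟨A, hA, w, rfl⟩ := hv
      refine Submodule.subset_span ⟨T' * A, hS₁mul T' (hSS₁ hT') A hA, w, ?_⟩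
      rw [Matrix.mulVec_mulVec, mul_assoc]
    | zero => simp
    | add v w _ _ hv hw => rw [Matrix.mulVec_add]; exact U.add_mem hv hw
    | smul c v _ hv => rw [Matrix.mulVec_smul]; exact U.smul_mem c hv
  have hUne : U ≠ ⊥ := by
    obtain ⟨w, hw⟩ : ∃ w, X.mulVec w ≠ 0 := by
      by_contra h
      push_neg at h
      exact hX0 (mulVecLin_eq_zero_iff.mp (LinearMap.ext fun w => by simpa using h w))
    intro hbot
    have : X.mulVec w ∈ U := Submodule.subset_span ⟨1, h1S₁, w, by simp⟩
    rw [hbot, Submodule.mem_bot] at this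
    exact hw this
  have hUtop : U = ⊤ := (hirr U hUinv).resolve_left hUne
  -- X kills all of U = ⊤, contradiction
  have hXker : ∀ v, X.mulVec v = 0 := by
    have hUle : U ≤ LinearMap.ker X.mulVecLin := by
      rw [hUdef, Submodule.span_le]
      rintro v ⟨A, hA, w, rfl⟩
      simp only [SetLike.mem_coe, LinearMap.mem_ker, Matrix.mulVecLin_apply]
      rw [Matrix.mulVec_mulVec, ← mul_assoc, hkey A hA, Matrix.zero_mulVec]
    intro v
    have : v ∈ LinearMap.ker X.mulVecLin := hUle (hUtop ▸ Submodule.mem_top)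
    simpa using this
  exact hX0 (mulVecLin_eq_zero_iff.mp (LinearMap.ext fun w => by simpa using hXker w))
end

section
/- Levitzki's theorem: Every multiplicative semigroup of complex n×n matrices (n ≥ 1) consisting entirely of nilpotent matrices is triangularizable; in particular, if n ≥ 2 such a semigroup is reducible (has a nontrivial common invariant subspace). -/
open Module LinearMap Polynomial

section LevitzkiAux

private lemma pow_mem_inv {V : Type} [AddCommGroup V] [Module ℂ V]
    (f : Module.End ℂ V) (p : Submodule ℂ V) (hp : ∀ x ∈ p, f x ∈ p) (k : ℕ) :
    ∀ x ∈ p, (f ^ k) x ∈ p := by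
  induction k with
  | zero => simpa using fun x hx => hx
  | succ k ih =>
    intro x hx
    rw [pow_succ', Module.End.mul_apply]
    exact hp _ (ih x hx)

lemma trace_pow_nilpotent {V : Type} [AddCommGroup V] [Module ℂ V] [FiniteDimensional ℂ V]
    (f : Module.End ℂ V) (h : ∀ k : ℕ, 1 ≤ k → trace ℂ V (f ^ k) = 0) :
    IsNilpotent f := by
  classical
  set K : Submodule ℂ V := ⨆ m : ℕ, ker (f ^ m) with hKdef
  set W : Submodule ℂ V := ⨅ m : ℕ, range (f ^ m) with hWdef
  have hcompl : IsCompl K W := f.isCompl_iSup_ker_pow_iInf_range_pow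
  have hker_mono : Monotone fun m : ℕ => ker (f ^ m) := by
    intro a b hab x hx
    obtain ⟨c, rfl⟩ := Nat.exists_eq_add_of_le hab
    have hfc : f ^ (a + c) = f ^ c * f ^ a := by rw [add_comm, pow_add]
    simp only [mem_ker] at hx ⊢
    rw [hfc, Module.End.mul_apply, hx, map_zero]
  have hmemK : ∀ x ∈ K, ∃ m : ℕ, (f ^ m) x = 0 := by
    intro x hx
    rw [hKdef, Submodule.mem_iSup_of_directed _ (hker_mono.directed_le)] at hx
    exact hx.imp fun m hm => mem_ker.mp hm
  have hK : ∀ x ∈ K, f x ∈ K := by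
    intro x hx
    obtain ⟨m, hm⟩ := hmemK x hx
    refine Submodule.mem_iSup_of_mem m ?_
    rw [mem_ker, ← Module.End.mul_apply, ← pow_succ, pow_succ', Module.End.mul_apply, hm, map_zero]
  have hW : ∀ x ∈ W, f x ∈ W := by
    intro x hx
    rw [hWdef, Submodule.mem_iInf] at hx ⊢
    intro m
    obtain ⟨y, hy⟩ := hx m
    exact ⟨f y, by rw [← Module.End.mul_apply, ← pow_succ, pow_succ', Module.End.mul_apply, hy]⟩
  -- the restriction to K is nilpotent
  have hFnil : IsNilpotent (f.restrict hK) := by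
    refine ((charpoly_nilpotent_tfae (f.restrict hK)).out 2 0).mp ?_
    rintro ⟨x, hx⟩
    obtain ⟨m, hm⟩ := hmemK x hx
    refine ⟨m, ?_⟩
    rw [Module.End.pow_restrict]
    exact Subtype.ext (by simpa using hm)
  -- trace additivity over the Fitting decomposition
  set N : Bool → Submodule ℂ V := fun b => if b then K else W with hN
  have hint : DirectSum.IsInternal N := by
    rw [DirectSum.isInternal_submodule_iff_isCompl N (i := true) (j := false) (by simp)
      (by ext b; cases b <;> simp)]
    simpa [hN] using hcompl
  have hNmaps : ∀ k : ℕ, ∀ b : Bool, Set.MapsTo (f ^ k) (N b) (N b) := by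
    intro k b x hx
    cases b
    · exact pow_mem_inv f W hW k x (by simpa [hN] using hx)
    · exact pow_mem_inv f K hK k x (by simpa [hN] using hx)
  have htr : ∀ k : ℕ, 1 ≤ k →
      trace ℂ W ((f ^ k).restrict (hNmaps k false)) = 0 := by
    intro k hk
    have := trace_eq_sum_trace_restrict hint (hNmaps k)
    rw [h k hk] at this
    have htrK : trace ℂ (N true) ((f ^ k).restrict (hNmaps k true)) = 0 := by
      have : IsNilpotent ((f ^ k).restrict (hNmaps k true)) := by
        have heq : (f.restrict hK) ^ k = (f ^ k).restrict (hNmaps k true) := by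
          rw [Module.End.pow_restrict]
        obtain ⟨r, hr⟩ := hFnil
        exact ⟨r, by rw [← heq, ← pow_mul, mul_comm, pow_mul, hr,
          zero_pow (by omega : k ≠ 0)]⟩
      exact (isNilpotent_trace_of_isNilpotent this).eq_zero
    rw [Fintype.sum_bool, htrK, zero_add] at this
    exact this.symm
  -- the restriction to W
  set G := f.restrict hW with hG
  have hGpow : ∀ k : ℕ, G ^ k = (f ^ k).restrict (hNmaps k false) := fun k =>
    Module.End.pow_restrict k hW
  have hGtr : ∀ k : ℕ, 1 ≤ k → trace ℂ W (G ^ k) = 0 := by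
    intro k hk; rw [hGpow k]; exact htr k hk
  -- ker G = ⊥ hence constant coefficient of charpoly nonzero
  have hkerG : ∀ m : W, G m = 0 → m = 0 := by
    rintro ⟨x, hx⟩ hGx
    have hfx : f x = 0 := by
      have := congrArg Subtype.val hGx
      simpa [hG, LinearMap.restrict_apply] using this
    have hxK : x ∈ K := Submodule.mem_iSup_of_mem 1 (by simpa [mem_ker] using hfx)
    have : x ∈ K ⊓ W := ⟨hxK, hx⟩
    rw [hcompl.inf_eq_bot, Submodule.mem_bot] at this
    exact Subtype.ext this
  have hc0 : constantCoeff (charpoly G) ≠ 0 :=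
    ((not_hasEigenvalue_zero_tfae G).out 5 2).mp hkerG
  -- charpoly trace trick
  have haev : trace ℂ W ((aeval G) (charpoly G)) = 0 := by
    rw [aeval_self_charpoly, map_zero]
  rw [aeval_eq_sum_range, map_sum] at haev
  have hfr : (finrank ℂ W : ℂ) * constantCoeff (charpoly G) = 0 := by
    rw [← haev]
    have hd : 1 ≤ (charpoly G).natDegree + 1 := Nat.le_add_left 1 _
    rw [Finset.sum_eq_single 0]
    · simp [constantCoeff_apply, Module.End.one_eq_id, trace_id, mul_comm]
    · intro i _ hi
      rw [map_smul, hGtr i (Nat.one_le_iff_ne_zero.mpr hi), smul_zero]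
    · intro habs; exact absurd (Finset.mem_range.mpr (by omega)) habs
  have hWbot : W = ⊥ := by
    have : (finrank ℂ W : ℂ) = 0 := by
      rcases mul_eq_zero.mp hfr with h' | h'
      · exact h'
      · exact absurd h' hc0
    have : finrank ℂ W = 0 := by exact_mod_cast this
    exact Submodule.finrank_eq_zero.mp this
  have hKtop : K = ⊤ := by
    have := hcompl.sup_eq_top
    rwa [hWbot, sup_bot_eq] at this
  refine ((charpoly_nilpotent_tfae f).out 2 0).mp ?_
  intro m
  exact hmemK m (hKtop ▸ Submodule.mem_top)

lemma span_nilpotent {V : Type} [AddCommGroup V] [Module ℂ V] [FiniteDimensional ℂ V]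
    (S : Set (Module.End ℂ V)) (hmul : ∀ A ∈ S, ∀ B ∈ S, A * B ∈ S)
    (hnil : ∀ T ∈ S, IsNilpotent T) :
    ∀ x ∈ Submodule.span ℂ S, IsNilpotent x := by
  set W := Submodule.span ℂ S with hW
  have hWmul : ∀ x ∈ W, ∀ y ∈ W, x * y ∈ W := by
    intro x hx y hy
    have h1 : x * y ∈ W * W := Submodule.mul_mem_mul hx hy
    have h2 : W * W ≤ W := by
      rw [hW, Submodule.span_mul_span]
      refine Submodule.span_le.mpr ?_
      rintro - ⟨a, ha, b, hb, rfl⟩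
      exact Submodule.subset_span (hmul a ha b hb)
    exact h2 h1
  have htr : ∀ x ∈ W, trace ℂ V x = 0 := by
    intro x hx
    induction hx using Submodule.span_induction with
    | mem T hT => exact (isNilpotent_trace_of_isNilpotent (hnil T hT)).eq_zero
    | zero => simp
    | add a b _ _ ha hb => rw [map_add, ha, hb, add_zero]
    | smul c a _ ha => rw [map_smul, ha, smul_zero]
  have hpow : ∀ x ∈ W, ∀ k : ℕ, 1 ≤ k → x ^ k ∈ W := by
    intro x hx k hk
    induction k with
    | zero => omega
    | succ k ih =>
      rcases Nat.eq_or_lt_of_le hk with h1 | h1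
      · simpa [← h1] using hx
      · rw [pow_succ]
        exact hWmul _ (ih (by omega)) _ hx
  intro x hx
  exact trace_pow_nilpotent x fun k hk => htr _ (hpow x hx k hk)

attribute [local instance] LieRing.ofAssociativeRing

lemma exists_common_kernel {V : Type} [AddCommGroup V] [Module ℂ V] [FiniteDimensional ℂ V]
    [Nontrivial V]
    (S : Set (Module.End ℂ V)) (hmul : ∀ A ∈ S, ∀ B ∈ S, A * B ∈ S)
    (hnil : ∀ T ∈ S, IsNilpotent T) :
    ∃ z : V, z ≠ 0 ∧ ∀ T ∈ S, T z = 0 := by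
  have hspan := span_nilpotent S hmul hnil
  set L : LieSubalgebra ℂ (Module.End ℂ V) :=
    { Submodule.span ℂ S with
      lie_mem' := fun {x y} hx hy => by
        rw [Ring.lie_def]
        exact sub_mem (by
          have h1 : x * y ∈ Submodule.span ℂ S * Submodule.span ℂ S :=
            Submodule.mul_mem_mul hx hy
          have h2 : Submodule.span ℂ S * Submodule.span ℂ S ≤ Submodule.span ℂ S := by
            rw [Submodule.span_mul_span]
            refine Submodule.span_le.mpr ?_
            rintro - ⟨a, ha, b, hb, rfl⟩
            exact Submodule.subset_span (hmul a ha b hb)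
          exact h2 h1) (by
          have h1 : y * x ∈ Submodule.span ℂ S * Submodule.span ℂ S :=
            Submodule.mul_mem_mul hy hx
          have h2 : Submodule.span ℂ S * Submodule.span ℂ S ≤ Submodule.span ℂ S := by
            rw [Submodule.span_mul_span]
            refine Submodule.span_le.mpr ?_
            rintro - ⟨a, ha, b, hb, rfl⟩
            exact Submodule.subset_span (hmul a ha b hb)
          exact h2 h1) } with hLdef
  haveI : LieModule.IsNilpotent L V := by
    rw [LieModule.isNilpotent_iff_forall' (R := ℂ)]
    intro x
    exact hspan x.val x.2
  haveI := LieModule.nontrivial_max_triv_of_isNilpotent ℂ L V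
  obtain ⟨z, hz⟩ := exists_ne (0 : LieModule.maxTrivSubmodule ℂ L V)
  refine ⟨z.val, ?_, ?_⟩
  · intro h
    exact hz (by ext; simpa using h)
  · intro T hT
    have hm := (LieModule.mem_maxTrivSubmodule ℂ L V z.val).mp z.2
    exact hm ⟨T, Submodule.subset_span hT⟩

lemma triangular_basis (m : ℕ) :
    ∀ (V : Type) [AddCommGroup V] [Module ℂ V] [FiniteDimensional ℂ V],
      Module.finrank ℂ V = m →
      ∀ (S : Set (Module.End ℂ V)), (∀ A ∈ S, ∀ B ∈ S, A * B ∈ S) →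
      (∀ T ∈ S, IsNilpotent T) →
      ∃ b : Basis (Fin m) ℂ V, ∀ T ∈ S, ∀ j : Fin m,
        T (b j) ∈ Submodule.span ℂ (⇑b '' {i : Fin m | i < j}) := by
  induction m using Nat.strong_induction_on with
  | _ m ih =>
  intro V _ _ _ hVm S hmul hnil
  rcases Nat.eq_zero_or_pos m with hm | hm
  · subst hm
    haveI : Subsingleton V := finrank_zero_iff.mp hVm
    exact ⟨Basis.empty V, fun T hT j => j.elim0⟩
  haveI : Nontrivial V := finrank_pos_iff.mp (hVm ▸ hm)
  obtain ⟨z, hz0, hzK⟩ := exists_common_kernel S hmul hnil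
  set K : Submodule ℂ V := ⨅ T ∈ S, ker T with hKdef
  have hmemK : ∀ x, x ∈ K ↔ ∀ T ∈ S, T x = 0 := by
    intro x
    simp [hKdef, Submodule.mem_iInf, mem_ker]
  have hzmem : z ∈ K := (hmemK z).mpr hzK
  have hKbot : K ≠ ⊥ := fun h => hz0 (by simpa [h] using hzmem)
  obtain ⟨W', hWc⟩ := Submodule.exists_isCompl K
  set k := finrank ℂ K with hk
  set m' := finrank ℂ (V ⧸ K) with hm'
  have hsum : m' + k = m := by rw [hm', hk, Submodule.finrank_quotient_add_finrank, hVm]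
  have hkpos : 0 < k := by
    rcases Nat.eq_zero_or_pos k with h | h
    · rw [hk] at h
      exact absurd (Submodule.finrank_eq_zero.mp h) hKbot
    · exact h
  have hm'lt : m' < m := by omega
  -- the induced semigroup on the quotient
  set S' : Set (Module.End ℂ (V ⧸ K)) :=
    {g | ∃ T ∈ S, ∀ v : V, g (K.mkQ v) = K.mkQ (T v)} with hS'def
  have hS'mul : ∀ A ∈ S', ∀ B ∈ S', A * B ∈ S' := by
    rintro A ⟨T₁, hT₁, h₁⟩ B ⟨T₂, hT₂, h₂⟩
    exact ⟨T₁ * T₂, hmul T₁ hT₁ T₂ hT₂, fun v => by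
      rw [Module.End.mul_apply, h₂, h₁, Module.End.mul_apply]⟩
  have hS'pow : ∀ g ∈ S', ∀ T ∈ S, (∀ v : V, g (K.mkQ v) = K.mkQ (T v)) →
      ∀ (r : ℕ) (v : V), (g ^ r) (K.mkQ v) = K.mkQ ((T ^ r) v) := by
    intro g _ T _ hgT r
    induction r with
    | zero => intro v; simp
    | succ r ihr =>
      intro v
      rw [pow_succ', pow_succ', Module.End.mul_apply, Module.End.mul_apply, ihr, hgT]
  have hS'nil : ∀ g ∈ S', IsNilpotent g := by
    rintro g hg
    obtain ⟨T, hT, hgT⟩ := hg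
    obtain ⟨r, hr⟩ := hnil T hT
    refine ⟨r, ?_⟩
    refine LinearMap.ext fun x => ?_
    obtain ⟨v, rfl⟩ := Submodule.mkQ_surjective K x
    rw [hS'pow g ⟨T, hT, hgT⟩ T hT hgT r v, hr]
    simp
  obtain ⟨c, hc⟩ := ih m' hm'lt (V ⧸ K) hm'.symm S' hS'mul hS'nil
  -- assemble the basis
  have hknm : k + m' = m := by omega
  let a : Basis (Fin k) ℂ K := (Module.finBasis ℂ K).reindex (finCongr hk.symm)
  let e := Submodule.quotientEquivOfIsCompl K W' hWc
  let cW : Basis (Fin m') ℂ W' := c.map e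
  let E : (Fin k ⊕ Fin m') ≃ Fin m := finSumFinEquiv.trans (finCongr hknm)
  let b : Basis (Fin m) ℂ V :=
    ((a.prod cW).map (Submodule.prodEquivOfIsCompl K W' hWc)).reindex E
  have hbl : ∀ p : Fin k, b (E (Sum.inl p)) = (a p : V) := by
    intro p
    simp [b, Basis.reindex_apply, Basis.prod_apply, Submodule.coe_prodEquivOfIsCompl']
  have hbr : ∀ q : Fin m', b (E (Sum.inr q)) = (e (c q) : V) := by
    intro q
    simp [b, cW, Basis.reindex_apply, Basis.prod_apply, Submodule.coe_prodEquivOfIsCompl']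
  have hmkb : ∀ q : Fin m', K.mkQ (b (E (Sum.inr q))) = c q := by
    intro q
    rw [hbr, Submodule.mkQ_apply]
    exact Submodule.mk_quotientEquivOfIsCompl_apply hWc (c q)
  have hEinl : ∀ p : Fin k, ((E (Sum.inl p)) : ℕ) = (p : ℕ) := by
    intro p; simp [E]
  have hEinr : ∀ q : Fin m', ((E (Sum.inr q)) : ℕ) = k + (q : ℕ) := by
    intro q; simp [E]
  have hKspan : ∀ j : Fin m, k ≤ (j : ℕ) →
      K ≤ Submodule.span ℂ (⇑b '' {i : Fin m | i < j}) := by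
    intro j hj x hx
    have hx2 : x = ∑ p : Fin k, (a.repr ⟨x, hx⟩ p) • ((a p : V)) := by
      have := congrArg (Submodule.subtype K) (a.sum_repr ⟨x, hx⟩)
      simp only [map_sum, map_smul, Submodule.subtype_apply] at this
      exact this.symm
    rw [hx2]
    refine Submodule.sum_mem _ fun p _ => Submodule.smul_mem _ _ ?_
    refine Submodule.subset_span ⟨E (Sum.inl p), ?_, hbl p⟩
    simp only [Set.mem_setOf_eq, Fin.lt_def, hEinl p]
    omega
  refine ⟨b, ?_⟩
  intro T hT j
  rcases hE : E.symm j with p | q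
  · have hj : j = E (Sum.inl p) := by rw [← hE, Equiv.apply_symm_apply]
    rw [hj, hbl p]
    have : T (a p : V) = 0 := (hmemK _).mp (a p).2 T hT
    rw [this]
    exact Submodule.zero_mem _
  · have hj : j = E (Sum.inr q) := by rw [← hE, Equiv.apply_symm_apply]
    have hjval : (j : ℕ) = k + (q : ℕ) := by rw [hj]; exact hEinr q
    have hle : K ≤ Submodule.comap T K := by
      intro x hx
      rw [Submodule.mem_comap, (hmemK x).mp hx T hT]
      exact Submodule.zero_mem _
    set g : Module.End ℂ (V ⧸ K) := Submodule.mapQ K K T hle with hgdef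
    have hgT : ∀ v : V, g (K.mkQ v) = K.mkQ (T v) := fun v => rfl
    have hg : g ∈ S' := ⟨T, hT, hgT⟩
    have h1 : K.mkQ (T (b j)) ∈ Submodule.span ℂ (⇑c '' {i : Fin m' | i < q}) := by
      rw [← hgT, hj, hmkb q]
      exact hc g hg q
    have h2 : Submodule.span ℂ (⇑c '' {i : Fin m' | i < q}) ≤
        Submodule.map K.mkQ (Submodule.span ℂ (⇑b '' {i : Fin m | i < j})) := by
      rw [Submodule.map_span]
      refine Submodule.span_mono ?_
      rintro - ⟨i, hi, rfl⟩
      refine ⟨b (E (Sum.inr i)), ⟨E (Sum.inr i), ?_, rfl⟩, hmkb i⟩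
      simp only [Set.mem_setOf_eq, Fin.lt_def, hEinr i, hjval]
      exact Nat.add_lt_add_left hi k
    obtain ⟨u, hu, hum⟩ := h2 h1
    have hdiff : T (b j) - u ∈ K := by
      rw [← Submodule.ker_mkQ K, mem_ker, map_sub, hum, sub_self]
    have hfin : T (b j) = (T (b j) - u) + u := by abel
    rw [hfin]
    exact Submodule.add_mem _ (hKspan j (by omega) hdiff) hu

end LevitzkiAux

open Matrix

/-- Levitzki's theorem: a multiplicative semigroup of nilpotent complex `n × n`
matrices is simultaneously triangularizable; in particular, if `n ≥ 2` it has a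
nontrivial common invariant subspace. -/
theorem stmt8 {n : ℕ} (hn : 1 ≤ n) (S : Set (Matrix (Fin n) (Fin n) ℂ))
    (hmul : ∀ A ∈ S, ∀ B ∈ S, A * B ∈ S)
    (hnil : ∀ T ∈ S, IsNilpotent T) :
    (∃ Q : Matrix (Fin n) (Fin n) ℂ, IsUnit Q ∧
      ∀ T ∈ S, ∀ i j : Fin n, j < i → (Q * T * Q⁻¹) i j = 0) ∧
    (2 ≤ n → ∃ V : Submodule ℂ (Fin n → ℂ),
      (∀ T ∈ S, ∀ x ∈ V, T.mulVec x ∈ V) ∧ V ≠ ⊥ ∧ V ≠ ⊤) := by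
  classical
  -- transfer to endomorphisms
  set S' : Set (Module.End ℂ (Fin n → ℂ)) := Matrix.mulVecLin '' S with hS'def
  have hmve : ∀ T : Matrix (Fin n) (Fin n) ℂ, Matrix.toLinAlgEquiv' T = T.mulVecLin := by
    intro T; rfl
  have hS'mul : ∀ A ∈ S', ∀ B ∈ S', A * B ∈ S' := by
    rintro - ⟨A, hA, rfl⟩ - ⟨B, hB, rfl⟩
    exact ⟨A * B, hmul A hA B hB, by rw [Matrix.mulVecLin_mul]; rfl⟩
  have hS'nil : ∀ g ∈ S', IsNilpotent g := by
    rintro - ⟨A, hA, rfl⟩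
    have := (hnil A hA).map (Matrix.toLinAlgEquiv' (n := Fin n) (R := ℂ))
    rwa [hmve A] at this
  obtain ⟨b, hb⟩ := triangular_basis n (Fin n → ℂ) (Module.finrank_fin_fun ℂ) S' hS'mul hS'nil
  have hbmem : ∀ T ∈ S, ∀ j : Fin n,
      T.mulVec (b j) ∈ Submodule.span ℂ (⇑b '' {i : Fin n | i < j}) := by
    intro T hT j
    have := hb T.mulVecLin ⟨T, hT, rfl⟩ j
    simpa using this
  constructor
  · -- triangularization
    set P : Matrix (Fin n) (Fin n) ℂ := (Pi.basisFun ℂ (Fin n)).toMatrix ⇑b with hPdef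
    haveI : Invertible P := Basis.invertibleToMatrix (Pi.basisFun ℂ (Fin n)) b
    have hPunit : IsUnit P := isUnit_of_invertible P
    have hPdet : IsUnit P.det := (Matrix.isUnit_iff_isUnit_det P).mp hPunit
    refine ⟨P⁻¹, ?_, ?_⟩
    · rw [← Matrix.invOf_eq_nonsing_inv]
      exact isUnit_of_invertible _
    intro T hT i j hji
    rw [Matrix.nonsing_inv_nonsing_inv P hPdet]
    have hPentry : ∀ k l : Fin n, P k l = b l k := by
      intro k l
      simp [hPdef, Basis.toMatrix_apply]
    have key : T * P = P * (LinearMap.toMatrix b b T.mulVecLin) := by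
      ext u v
      rw [Matrix.mul_apply, Matrix.mul_apply]
      have h1 : ∑ k, T u k * P k v = T.mulVec (b v) u := by
        simp [hPentry, Matrix.mulVec, dotProduct]
      have h2 : ∑ k, P u k * LinearMap.toMatrix b b T.mulVecLin k v
          = T.mulVec (b v) u := by
        have hrep := b.sum_repr (T.mulVec (b v))
        have := congrFun (congrArg (fun w : Fin n → ℂ => w) hrep) u
        calc ∑ k, P u k * LinearMap.toMatrix b b T.mulVecLin k v
            = ∑ k, (b.repr (T.mulVec (b v)) k) * (b k u) := by
              refine Finset.sum_congr rfl fun k _ => ?_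
              rw [hPentry, LinearMap.toMatrix_apply, Matrix.mulVecLin_apply, mul_comm]
          _ = (∑ k, (b.repr (T.mulVec (b v)) k) • (b k)) u := by
              rw [Finset.sum_apply]; simp [Pi.smul_apply, smul_eq_mul]
          _ = T.mulVec (b v) u := by rw [hrep]
      rw [h1, h2]
    have hconj : P⁻¹ * T * P = LinearMap.toMatrix b b T.mulVecLin := by
      rw [Matrix.mul_assoc, key, ← Matrix.mul_assoc, Matrix.nonsing_inv_mul P hPdet,
        Matrix.one_mul]
    rw [hconj, LinearMap.toMatrix_apply, Matrix.mulVecLin_apply]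
    have hsupp := b.repr_support_subset_of_mem_span {i' : Fin n | i' < j} (hbmem T hT j)
    by_contra habs
    exact absurd (hsupp (Finsupp.mem_support_iff.mpr habs)) (by simpa using not_lt.mpr hji.le)
  · -- reducibility
    intro hn2
    set i0 : Fin n := ⟨0, by omega⟩
    set i1 : Fin n := ⟨1, by omega⟩
    have hb0 : ∀ T ∈ S, T.mulVec (b i0) = 0 := by
      intro T hT
      have h := hbmem T hT i0
      have hempty : (⇑b '' {i : Fin n | i < i0}) = ∅ := by
        ext x
        simp only [Set.mem_image, Set.mem_setOf_eq, Set.mem_empty_iff_false, iff_false]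
        rintro ⟨i, hi, -⟩
        exact absurd hi (by simp [i0, Fin.lt_def])
      rw [hempty, Submodule.span_empty, Submodule.mem_bot] at h
      exact h
    refine ⟨Submodule.span ℂ {b i0}, ?_, ?_, ?_⟩
    · intro T hT x hx
      obtain ⟨c, rfl⟩ := (Submodule.mem_span_singleton (R := ℂ) (y := b i0)).mp hx
      have : T.mulVec (c • b i0) = c • T.mulVec (b i0) := T.mulVec_smul c (b i0)
      rw [this, hb0 T hT, smul_zero]
      exact Submodule.zero_mem _
    · intro h
      have := Submodule.mem_span_singleton_self (R := ℂ) (b i0)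
      rw [h, Submodule.mem_bot] at this
      exact b.ne_zero i0 this
    · intro h
      have h1 : b i1 ∉ Submodule.span ℂ (⇑b '' {i0}) := by
        refine b.linearIndependent.notMem_span_image ?_
        simp only [Set.mem_singleton_iff]
        intro hcon
        have : (1 : ℕ) = 0 := congrArg Fin.val hcon
        omega
      rw [Set.image_singleton] at h1
      exact h1 (h ▸ Submodule.mem_top)
end

section
/- Let S be a norm-closed bounded semigroup of complex n×n matrices and T ∈ S with spectral radius r(T) = 1. Then S contains a nonzero idempotent P with range(P) ⊆ range(T) and ker(T) ⊆ ker(P). -/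
open Matrix ENNReal

noncomputable def matEquiv (n : ℕ) :
    Matrix (Fin n) (Fin n) ℂ ≃ₐ[ℂ] (EuclideanSpace ℂ (Fin n) →L[ℂ] EuclideanSpace ℂ (Fin n)) :=
  AlgEquivClass.toAlgEquiv (Matrix.toEuclideanCLM (𝕜 := ℂ))

noncomputable def matCLE (n : ℕ) :
    Matrix (Fin n) (Fin n) ℂ ≃L[ℂ] (EuclideanSpace ℂ (Fin n) →L[ℂ] EuclideanSpace ℂ (Fin n)) :=
  (matEquiv n).toLinearEquiv.toContinuousLinearEquiv

theorem pow_norm_ge (n : ℕ) (hn : 0 < n) (T : Matrix (Fin n) (Fin n) ℂ)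
    (hr : spectralRadius ℂ T = 1) (k : ℕ) :
    1 ≤ ‖Matrix.toEuclideanCLM (𝕜 := ℂ) (T ^ (k + 1))‖ := by
  haveI : Nonempty (Fin n) := Fin.pos_iff_nonempty.mp hn
  set a := Matrix.toEuclideanCLM (𝕜 := ℂ) T with ha
  have hra : spectralRadius ℂ a = 1 := by
    rw [spectralRadius, ha, AlgEquiv.spectrum_eq (Matrix.toEuclideanCLM (𝕜 := ℂ)) T,
      ← spectralRadius, hr]
  have h := spectrum.spectralRadius_le_pow_nnnorm_pow_one_div ℂ a k
  rw [hra, nnnorm_one, ENNReal.coe_one, ENNReal.one_rpow, mul_one] at h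
  have h2 : (1 : ℝ≥0∞) ≤ (‖a ^ (k + 1)‖₊ : ℝ≥0∞) := by
    by_contra hlt
    push_neg at hlt
    have := ENNReal.rpow_lt_one hlt (by positivity : (0:ℝ) < 1 / (k + 1))
    exact absurd h (not_le.mpr this)
  have h3 : (1 : ℝ) ≤ ‖a ^ (k + 1)‖ := by exact_mod_cast h2
  rwa [ha, ← map_pow] at h3

/-- A norm-closed bounded matrix semigroup containing an element `T` of spectral
radius `1` contains a nonzero idempotent `P` with `range P ⊆ range T` and
`ker T ⊆ ker P`. -/
theorem stmt9 {n : ℕ} (S : Set (Matrix (Fin n) (Fin n) ℂ))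
    (hmul : ∀ A ∈ S, ∀ B ∈ S, A * B ∈ S)
    (hclosed : IsClosed S)
    (hbdd : ∃ C : ℝ, ∀ T ∈ S, opNorm T ≤ C)
    (T : Matrix (Fin n) (Fin n) ℂ) (hT : T ∈ S)
    (hr : spectralRadius ℂ T = 1) :
    ∃ P ∈ S, P * P = P ∧ P ≠ 0 ∧
      LinearMap.range P.mulVecLin ≤ LinearMap.range T.mulVecLin ∧
      LinearMap.ker T.mulVecLin ≤ LinearMap.ker P.mulVecLin := by
  classical
  obtain ⟨C, hC⟩ := hbdd
  rcases Nat.eq_zero_or_pos n with hn0 | hn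
  · exfalso
    subst hn0
    have hsp : spectrum ℂ T = ∅ := by
      ext z
      simp [spectrum.mem_iff, isUnit_of_subsingleton]
    rw [spectralRadius, hsp] at hr
    simp at hr
  have hpow : ∀ k : ℕ, T ^ (k + 1) ∈ S := by
    intro k
    induction k with
    | zero => simpa using hT
    | succ k ih => rw [pow_succ]; exact hmul _ ih _ hT
  set f := fun A : Matrix (Fin n) (Fin n) ℂ => Matrix.toEuclideanCLM (𝕜 := ℂ) A with hf
  have hfc : Continuous f := (matCLE n).continuous
  -- S is compact
  haveI : ProperSpace (EuclideanSpace ℂ (Fin n) →L[ℂ] EuclideanSpace ℂ (Fin n)) :=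
    FiniteDimensional.proper ℂ _
  have hScpt : IsCompact S := by
    refine IsCompact.of_isClosed_subset
      ((isCompact_closedBall (0 : EuclideanSpace ℂ (Fin n) →L[ℂ] EuclideanSpace ℂ (Fin n)) C).image
        (matCLE n).symm.continuous) hclosed ?_
    intro A hA
    refine ⟨matCLE n A, ?_, (matCLE n).symm_apply_apply A⟩
    rw [Metric.mem_closedBall, dist_zero_right]
    exact hC A hA
  set Pw : Set (Matrix (Fin n) (Fin n) ℂ) := Set.range (fun k : ℕ => T ^ (k + 1)) with hPw
  set K : Set (Matrix (Fin n) (Fin n) ℂ) := closure Pw with hK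
  have hPwS : Pw ⊆ S := by rintro _ ⟨k, rfl⟩; exact hpow k
  have hKS : K ⊆ S := closure_minimal hPwS hclosed
  have hKcpt : IsCompact K := hScpt.of_isClosed_subset isClosed_closure hKS
  have hTK : T ∈ K := subset_closure ⟨0, by simp⟩
  -- every element of K has operator norm at least 1
  have hnorm : ∀ A ∈ K, 1 ≤ ‖f A‖ := by
    have hsub : Pw ⊆ {A | 1 ≤ ‖f A‖} := by
      rintro _ ⟨k, rfl⟩; exact pow_norm_ge n hn T hr k
    intro A hA
    exact closure_minimal hsub (isClosed_le continuous_const hfc.norm) hA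
  -- K is closed under multiplication
  have hmulK : ∀ a ∈ K, ∀ b ∈ K, a * b ∈ K := by
    have step1 : ∀ b ∈ Pw, ∀ a ∈ K, a * b ∈ K := by
      rintro _ ⟨k, rfl⟩ a ha
      have hmt : Set.MapsTo (fun a => a * T ^ (k + 1)) Pw Pw := by
        rintro _ ⟨j, rfl⟩
        refine ⟨j + k + 1, ?_⟩
        show T ^ (j + k + 1 + 1) = T ^ (j + 1) * T ^ (k + 1)
        rw [← pow_add]
        congr 1
        omega
      exact hmt.closure (continuous_id.mul continuous_const) ha
    intro a ha b hb
    have hmt : Set.MapsTo (fun b => a * b) Pw K := fun b hbP => step1 b hbP a ha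
    exact hmt.closure_left (continuous_const.mul continuous_id) isClosed_closure hb
  -- Zorn's lemma: a minimal closed subsemigroup of K
  set 𝒮 : Set (Set (Matrix (Fin n) (Fin n) ℂ)) :=
    {M | M ⊆ K ∧ M.Nonempty ∧ IsClosed M ∧ ∀ a ∈ M, ∀ b ∈ M, a * b ∈ M} with h𝒮
  have hK𝒮 : K ∈ 𝒮 := ⟨subset_rfl, ⟨T, hTK⟩, isClosed_closure, hmulK⟩
  have Hchain : ∀ c ⊆ 𝒮, IsChain (· ⊆ ·) c → c.Nonempty →
      ∃ lb ∈ 𝒮, ∀ s ∈ c, lb ⊆ s := by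
    intro c hc𝒮 hchain hcne
    haveI := hcne.to_subtype
    have hne : (⋂₀ c).Nonempty := by
      apply IsCompact.nonempty_sInter_of_directed_nonempty_isCompact_isClosed
      · intro x hx y hy
        rcases hchain.total hx hy with h | h
        · exact ⟨x, hx, Set.Subset.rfl, h⟩
        · exact ⟨y, hy, h, Set.Subset.rfl⟩
      · exact fun U hU => (hc𝒮 hU).2.1
      · exact fun U hU => hKcpt.of_isClosed_subset (hc𝒮 hU).2.2.1 (hc𝒮 hU).1
      · exact fun U hU => (hc𝒮 hU).2.2.1
    refine ⟨⋂₀ c, ⟨?_, hne, ?_, ?_⟩, fun s hs => Set.sInter_subset_of_mem hs⟩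
    · obtain ⟨s, hs⟩ := hcne
      exact (Set.sInter_subset_of_mem hs).trans (hc𝒮 hs).1
    · exact isClosed_sInter fun U hU => (hc𝒮 hU).2.2.1
    · intro a ha b hb
      exact Set.mem_sInter.mpr fun U hU =>
        (hc𝒮 hU).2.2.2 a (Set.mem_sInter.mp ha U hU) b (Set.mem_sInter.mp hb U hU)
  obtain ⟨M, -, hMmin⟩ := zorn_superset_nonempty 𝒮 Hchain K hK𝒮
  obtain ⟨hMK, ⟨x, hx⟩, hMcl, hMmul⟩ := hMmin.prop
  have hMcpt : IsCompact M := hKcpt.of_isClosed_subset hMcl hMK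
  -- x * M = M by minimality
  have hxM𝒮 : ((x * ·) '' M) ∈ 𝒮 := by
    refine ⟨?_, ⟨x * x, x, hx, rfl⟩, ?_, ?_⟩
    · rintro _ ⟨y, hy, rfl⟩; exact hMK (hMmul x hx y hy)
    · exact (hMcpt.image (continuous_const.mul continuous_id)).isClosed
    · rintro _ ⟨u, hu, rfl⟩ _ ⟨v, hv, rfl⟩
      exact ⟨u * (x * v), hMmul u hu _ (hMmul x hx v hv), (mul_assoc x u (x * v)).symm⟩
  have hxMsub : (x * ·) '' M ⊆ M := by rintro _ ⟨y, hy, rfl⟩; exact hMmul x hx y hy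
  have hxMeq : (x * ·) '' M = M := hxMsub.antisymm (hMmin.2 hxM𝒮 hxMsub)
  obtain ⟨e, heM, hxe⟩ : ∃ e ∈ M, x * e = x := by
    have hx' : x ∈ (x * ·) '' M := hxMeq.symm ▸ hx
    obtain ⟨e, heM, he⟩ := hx'
    exact ⟨e, heM, he⟩
  -- {y ∈ M | x * y = x} = M by minimality, so x is idempotent
  have hN𝒮 : {y ∈ M | x * y = x} ∈ 𝒮 := by
    refine ⟨fun y hy => hMK hy.1, ⟨e, heM, hxe⟩, ?_, ?_⟩
    · exact hMcl.inter (isClosed_eq (continuous_const.mul continuous_id) continuous_const)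
    · rintro a ⟨haM, hxa⟩ b ⟨hbM, hxb⟩
      exact ⟨hMmul a haM b hbM, by rw [← mul_assoc, hxa, hxb]⟩
  have hNM : {y ∈ M | x * y = x} ⊆ M := fun y hy => hy.1
  have hNeq : {y ∈ M | x * y = x} = M := hNM.antisymm (hMmin.2 hN𝒮 hNM)
  have hxN : x ∈ {y ∈ M | x * y = x} := hNeq.symm ▸ hx
  have hxx : x * x = x := hxN.2
  have hxK : x ∈ K := hMK hx
  refine ⟨x, hKS hxK, hxx, ?_, ?_, ?_⟩
  · -- x ≠ 0
    intro h0
    have h1 := hnorm x hxK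
    rw [h0] at h1
    have hf0 : f 0 = 0 := map_zero (Matrix.toEuclideanCLM (𝕜 := ℂ))
    rw [hf0, norm_zero] at h1
    exact absurd h1 (by norm_num)
  · -- range x ⊆ range T
    set K0 : Set (Matrix (Fin n) (Fin n) ℂ) := closure (Set.range fun k : ℕ => T ^ k) with hK0
    have hK0cpt : IsCompact K0 := by
      have hsub : (Set.range fun k : ℕ => T ^ k) ⊆ S ∪ {(1 : Matrix (Fin n) (Fin n) ℂ)} := by
        rintro _ ⟨k, rfl⟩
        cases k with
        | zero => exact Or.inr (by simp)
        | succ k => exact Or.inl (hpow k)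
      exact (hScpt.union isCompact_singleton).of_isClosed_subset isClosed_closure
        (closure_minimal hsub (hclosed.union isClosed_singleton))
    have him : K ⊆ (T * ·) '' K0 := by
      refine closure_minimal ?_ ((hK0cpt.image (continuous_const.mul continuous_id)).isClosed)
      rintro _ ⟨k, rfl⟩
      exact ⟨T ^ k, subset_closure ⟨k, rfl⟩, (pow_succ' T k).symm⟩
    obtain ⟨Q, hQ, hxQ⟩ := him hxK
    rw [← hxQ, Matrix.mulVecLin_mul]
    exact LinearMap.range_comp_le_range _ _
  · -- ker T ⊆ ker x
    intro v hv
    rw [LinearMap.mem_ker, Matrix.mulVecLin_apply] at hv ⊢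
    have hCv : K ⊆ {A | A *ᵥ v = 0} := by
      refine closure_minimal ?_
        (isClosed_eq (Continuous.matrix_mulVec continuous_id continuous_const) continuous_const)
      rintro _ ⟨k, rfl⟩
      show T ^ (k + 1) *ᵥ v = 0
      rw [pow_succ, ← Matrix.mulVec_mulVec, hv, Matrix.mulVec_zero]
    exact hCv hxK
end

section
/- With t > 0 irrational and S the semigroup {[[e^{int},0],[e^{imt},0]], [[0,e^{int}],[0,e^{imt}]] : n,m ∈ ℕ⁺} of 2×2 matrices, the norm closure of S contains the matrices [[1,0],[1,0]] and [[0,1],[0,1]], which are non-commuting idempotents. Hence the closure of S contains idempotents that do not commute. -/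
open Matrix

/-- The semigroup of Example 2 of the paper: matrices
`[[e^{int}, 0], [e^{imt}, 0]]` and `[[0, e^{int}], [0, e^{imt}]]`
with `n, m` positive integers. -/
def Sexample (t : ℝ) : Set (Matrix (Fin 2) (Fin 2) ℂ) :=
  {M | ∃ n m : ℕ, 0 < n ∧ 0 < m ∧
    (M = !![Complex.exp (Complex.I * n * t), 0;
            Complex.exp (Complex.I * m * t), 0] ∨
     M = !![0, Complex.exp (Complex.I * n * t);
            0, Complex.exp (Complex.I * m * t)])}


open Filter

lemma aux1 (t : ℝ) (ε : ℝ) (hε : 0 < ε) :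
    ∃ n : ℕ, 0 < n ∧ ‖Complex.exp (Complex.I * n * t) - 1‖ < ε := by
  set f : ℕ → ℂ := fun n => Complex.exp (Complex.I * n * t) with hf
  have habs : ∀ n : ℕ, ‖f n‖ = 1 := by
    intro n
    simp [hf, Complex.norm_exp]
  have hb : Bornology.IsBounded (Set.range f) := by
    rw [Metric.isBounded_iff_subset_closedBall 0]
    exact ⟨1, by rintro x ⟨n, rfl⟩; simp [Complex.dist_eq, habs n]⟩
  obtain ⟨a, -, φ, hφ, hconv⟩ := tendsto_subseq_of_bounded hb (fun n => Set.mem_range_self n)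
  have hc : CauchySeq (f ∘ φ) := hconv.cauchySeq
  obtain ⟨N, hN⟩ := Metric.cauchySeq_iff'.1 hc ε hε
  have hd := hN (N + 1) (Nat.le_succ N)
  set k := φ N
  set l := φ (N + 1)
  have hkl : k < l := hφ (Nat.lt_succ_self N)
  refine ⟨l - k, Nat.sub_pos_of_lt hkl, ?_⟩
  have hcast : (Complex.I * (↑(l - k) : ℂ) * t) = Complex.I * l * t - Complex.I * k * t := by
    push_cast [Nat.cast_sub hkl.le]
    ring
  have hne : f k ≠ 0 := Complex.exp_ne_zero _
  have : Complex.exp (Complex.I * (↑(l - k) : ℂ) * t) - 1 = (f l - f k) / f k := by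
    rw [hcast, Complex.exp_sub]
    field_simp [hf]
    simp only [hf]
    ring
  rw [this, norm_div, habs k, div_one]
  simpa [Complex.dist_eq] using hd

/-- For irrational `t > 0`, the (norm) closure of `Sexample t` contains the
idempotents `[[1,0],[1,0]]` and `[[0,1],[0,1]]`, which do not commute. -/
theorem stmt16 (t : ℝ) (ht : 0 < t) (hirrat : Irrational t) :
    (!![(1 : ℂ), 0; 1, 0] ∈ closure (Sexample t)) ∧
    (!![(0 : ℂ), 1; 0, 1] ∈ closure (Sexample t)) ∧
    !![(1 : ℂ), 0; 1, 0] * !![(1 : ℂ), 0; 1, 0] = !![(1 : ℂ), 0; 1, 0] ∧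
    !![(0 : ℂ), 1; 0, 1] * !![(0 : ℂ), 1; 0, 1] = !![(0 : ℂ), 1; 0, 1] ∧
    !![(1 : ℂ), 0; 1, 0] * !![(0 : ℂ), 1; 0, 1] ≠
      !![(0 : ℂ), 1; 0, 1] * !![(1 : ℂ), 0; 1, 0] := by
  -- a sequence of positive naturals with exp(I a_k t) → 1
  have key : ∃ a : ℕ → ℕ, (∀ k, 0 < a k) ∧
      Tendsto (fun k => Complex.exp (Complex.I * (a k) * t)) atTop (nhds 1) := by
    have h : ∀ k : ℕ, ∃ n : ℕ, 0 < n ∧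
        ‖Complex.exp (Complex.I * n * t) - 1‖ < 1 / (k + 1) :=
      fun k => aux1 t _ (by positivity)
    choose a ha1 ha2 using h
    refine ⟨a, ha1, ?_⟩
    rw [tendsto_iff_dist_tendsto_zero]
    refine squeeze_zero (fun k => dist_nonneg) (fun k => ?_) tendsto_one_div_add_atTop_nhds_zero_nat
    rw [Complex.dist_eq]
    exact (ha2 k).le
  obtain ⟨a, ha1, ha2⟩ := key
  have hmem1 : ∀ k, !![Complex.exp (Complex.I * (a k) * t), 0;
      Complex.exp (Complex.I * (a k) * t), 0] ∈ Sexample t :=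
    fun k => ⟨a k, a k, ha1 k, ha1 k, Or.inl rfl⟩
  have hmem2 : ∀ k, !![0, Complex.exp (Complex.I * (a k) * t);
      0, Complex.exp (Complex.I * (a k) * t)] ∈ Sexample t :=
    fun k => ⟨a k, a k, ha1 k, ha1 k, Or.inr rfl⟩
  have htend1 : Tendsto (fun k => !![Complex.exp (Complex.I * (a k) * t), 0;
      Complex.exp (Complex.I * (a k) * t), 0]) atTop (nhds !![(1 : ℂ), 0; 1, 0]) := by
    refine tendsto_pi_nhds.2 ?_
    intro i
    rw [tendsto_pi_nhds]
    intro j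
    fin_cases i <;> fin_cases j <;> simp <;> exact ha2
  have htend2 : Tendsto (fun k => !![(0:ℂ), Complex.exp (Complex.I * (a k) * t);
      0, Complex.exp (Complex.I * (a k) * t)]) atTop (nhds !![(0 : ℂ), 1; 0, 1]) := by
    refine tendsto_pi_nhds.2 ?_
    intro i
    rw [tendsto_pi_nhds]
    intro j
    fin_cases i <;> fin_cases j <;> simp <;> exact ha2
  refine ⟨mem_closure_of_tendsto htend1 (Eventually.of_forall hmem1),
    mem_closure_of_tendsto htend2 (Eventually.of_forall hmem2), ?_, ?_, ?_⟩
  · ext i j; fin_cases i <;> fin_cases j <;> simp [Matrix.mul_apply, Fin.sum_univ_two]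
  · ext i j; fin_cases i <;> fin_cases j <;> simp [Matrix.mul_apply, Fin.sum_univ_two]
  · intro h
    have := congrFun (congrFun h 0) 0
    simp [Matrix.mul_apply, Fin.sum_univ_two] at this
end
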